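/- If (c·A).PosDef, then the function x ↦ c ⬝ᵥ f x on Fin n → ℝ attains its global minimum value -((c·b) ⬝ᵥ (c·A)⁻¹.mulVec (c·b)) at the point x* := -((c·A)⁻¹.mulVec (c·b)), and x* is the unique global minimizer; consequently the set ∂F_c of minimizers of y ↦ c ⬝ᵥ y over F consists of exactly one point, namely f x*. -/

import Mathlib

open Matrix

theorem posdef_direction_unique_minimizer (n m : ℕ)
    (A : Fin m → Matrix (Fin n) (Fin n) ℝ) (hA : ∀ k, (A k)ᵀ = A k)
    (b : Fin m → (Fin n → ℝ))
    (f : (Fin n → ℝ) → (Fin m → ℝ))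
    (hf : ∀ x k, f x k = x ⬝ᵥ (A k).mulVec x + 2 * (b k ⬝ᵥ x))
    (c : Fin m → ℝ) (hpos : (∑ k, c k • A k).PosDef)
    (xstar : Fin n → ℝ)
    (hxstar : xstar = -((∑ k, c k • A k)⁻¹.mulVec (∑ k, c k • b k))) :
    (∀ x : Fin n → ℝ, c ⬝ᵥ f xstar ≤ c ⬝ᵥ f x) ∧
    c ⬝ᵥ f xstar = -((∑ k, c k • b k) ⬝ᵥ (∑ k, c k • A k)⁻¹.mulVec (∑ k, c k • b k)) ∧
    (∀ x : Fin n → ℝ, (∀ x' : Fin n → ℝ, c ⬝ᵥ f x ≤ c ⬝ᵥ f x') → x = xstar) ∧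
    {y ∈ Set.range f | ∀ y' ∈ Set.range f, c ⬝ᵥ y ≤ c ⬝ᵥ y'} = {f xstar} := by
  set M := ∑ k, c k • A k with hM
  set β := ∑ k, c k • b k with hβ
  have hMsymm : Mᵀ = M := by
    rw [hM, Matrix.transpose_sum]
    exact Finset.sum_congr rfl fun k _ => by rw [Matrix.transpose_smul, hA]
  have hdet : IsUnit M.det := isUnit_iff_ne_zero.mpr hpos.det_pos.ne'
  have hMx : M.mulVec xstar = -β := by
    rw [hxstar, Matrix.mulVec_neg, Matrix.mulVec_mulVec, Matrix.mul_nonsing_inv _ hdet,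
      Matrix.one_mulVec]
  have quad : ∀ x, c ⬝ᵥ f x = x ⬝ᵥ M.mulVec x + 2 * (β ⬝ᵥ x) := by
    intro x
    have hsum : M.mulVec x = ∑ k, c k • ((A k).mulVec x) := by
      ext j
      simp only [hM, Matrix.mulVec, dotProduct, Matrix.sum_apply, Matrix.smul_apply,
        smul_eq_mul, Finset.sum_apply, Pi.smul_apply, Finset.sum_mul, Finset.mul_sum, mul_assoc]
      rw [Finset.sum_comm]
    have hq : x ⬝ᵥ M.mulVec x = ∑ k, c k * (x ⬝ᵥ (A k).mulVec x) := by
      rw [hsum]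
      simp only [dotProduct, Finset.sum_apply, Pi.smul_apply, smul_eq_mul, Finset.mul_sum]
      rw [Finset.sum_comm]
      exact Finset.sum_congr rfl fun k _ => Finset.sum_congr rfl fun i _ => by ring
    have hr : β ⬝ᵥ x = ∑ k, c k * (b k ⬝ᵥ x) := by
      simp only [hβ, dotProduct, Finset.sum_apply, Pi.smul_apply, smul_eq_mul,
        Finset.sum_mul, Finset.mul_sum, mul_assoc]
      rw [Finset.sum_comm]
    have e1 : c ⬝ᵥ f x = ∑ k, c k * f x k := rfl
    rw [e1]
    simp_rw [hf]
    rw [hq, hr, Finset.mul_sum, ← Finset.sum_add_distrib]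
    exact Finset.sum_congr rfl fun k _ => by ring
  have hvm : Matrix.vecMul xstar M = -β := by
    rw [← Matrix.mulVec_transpose, hMsymm, hMx]
  have hdiff : ∀ x, c ⬝ᵥ f x - c ⬝ᵥ f xstar = (x - xstar) ⬝ᵥ M.mulVec (x - xstar) := by
    intro x
    rw [quad, quad, Matrix.mulVec_sub, sub_dotProduct, dotProduct_sub, dotProduct_sub, hMx,
      Matrix.dotProduct_mulVec xstar M x, hvm, dotProduct_neg, dotProduct_neg, neg_dotProduct,
      dotProduct_comm x β, dotProduct_comm xstar β]
    ring
  have hnonneg : ∀ x : Fin n → ℝ, 0 ≤ (x - xstar) ⬝ᵥ M.mulVec (x - xstar) := by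
    intro x
    by_cases h : x = xstar
    · simp [h]
    · have := hpos.dotProduct_mulVec_pos (x := x - xstar) (sub_ne_zero.mpr h)
      simpa using this.le
  have hmin : ∀ x : Fin n → ℝ, c ⬝ᵥ f xstar ≤ c ⬝ᵥ f x := by
    intro x
    have := hnonneg x
    linarith [hdiff x]
  have huniq : ∀ x : Fin n → ℝ, (∀ x' : Fin n → ℝ, c ⬝ᵥ f x ≤ c ⬝ᵥ f x') → x = xstar := by
    intro x hx
    by_contra h
    have h1 := hpos.dotProduct_mulVec_pos (x := x - xstar) (sub_ne_zero.mpr h)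
    have h2 := hx xstar
    have h3 := hdiff x
    simp only [star_trivial] at h1
    linarith
  have hval : c ⬝ᵥ f xstar = -(β ⬝ᵥ (M⁻¹).mulVec β) := by
    have h1 : xstar ⬝ᵥ M.mulVec xstar = -(xstar ⬝ᵥ β) := by
      rw [hMx, dotProduct_neg]
    have h2 : β ⬝ᵥ xstar = -(β ⬝ᵥ M⁻¹.mulVec β) := by
      rw [hxstar, dotProduct_neg]
    rw [quad, h1, dotProduct_comm xstar β, h2]
    ring
  refine ⟨hmin, hval, huniq, ?_⟩
  ext y
  constructor
  · rintro ⟨⟨x, rfl⟩, hy⟩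
    have : x = xstar := huniq x fun x' => hy (f x') ⟨x', rfl⟩
    simp [this]
  · rintro rfl
    exact ⟨⟨xstar, rfl⟩, fun y' ⟨x', hx'⟩ => hx' ▸ hmin x'⟩
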